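/- Let m, N ≥ 1, let γ₁, …, γ_{2m} be complex N×N matrices satisfying γ_j·γ_j = -1 and γ_j·γ_k + γ_k·γ_j = 0 for j ≠ k, let λ₁, …, λ_m be nonnegative real numbers, and let τ ∈ ℝ. For a C¹ function g : ℝ^m → ℂ^N define (Dg)(u) := Σ_{j=1}^m √λ_j · ( γ_j.mulVec(∂_j g(u)) + (2πiτ·u_j) · γ_{m+j}.mulVec(g(u)) ), where ∂_j denotes the partial derivative in the j-th coordinate. Then for every f : ℝ^m → ℂ^N of class C² and every u ∈ ℝ^m: (D(Df))(u) = Σ_{j=1}^m λ_j · ( -(∂_j ∂_j f)(u) + 4π²τ²·u_j² · f(u) ) + 2πiτ · Σ_{j=1}^m λ_j · (γ_j·γ_{m+j}).mulVec(f(u)). -/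

import Mathlib

/-- The horizontal Dirac-type operator on the Schrödinger representation space:
`(Dg)(u) = ∑_{j<m} √(λ j) • ( γ_j (∂_j g)(u) + (2πiτ u_j) • γ_{m+j} (g u) )`. -/
noncomputable def schroedingerDirac (m N : ℕ) (γ : ℕ → Matrix (Fin N) (Fin N) ℂ)
    (lam : ℕ → ℝ) (τ : ℝ) (g : (Fin m → ℝ) → (Fin N → ℂ)) :
    (Fin m → ℝ) → (Fin N → ℂ) :=
  fun u => ∑ j : Fin m, ((Real.sqrt (lam j) : ℝ) : ℂ) •
    ((γ (j : ℕ)).mulVec (fderiv ℝ g u (Pi.single j 1)) +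
      ((((2 * Real.pi * τ * u j : ℝ) : ℂ) * Complex.I) •
        (γ (m + (j : ℕ))).mulVec (g u)))

open ContinuousLinearMap

noncomputable def mvL (N : ℕ) (A : Matrix (Fin N) (Fin N) ℂ) :
    (Fin N → ℂ) →L[ℝ] (Fin N → ℂ) :=
  LinearMap.toContinuousLinearMap (A.mulVecLin.restrictScalars ℝ)

@[simp] lemma mvL_apply (N : ℕ) (A : Matrix (Fin N) (Fin N) ℂ) (v : Fin N → ℂ) :
    mvL N A v = A.mulVec v := rfl

noncomputable def phiL (m : ℕ) (τ : ℝ) (j : Fin m) : (Fin m → ℝ) →L[ℝ] ℂ :=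
  Complex.I • ((2 * Real.pi * τ) • (Complex.ofRealCLM.comp (ContinuousLinearMap.proj j)))

lemma phiL_eq (m : ℕ) (τ : ℝ) (j : Fin m) (v : Fin m → ℝ) :
    phiL m τ j v = ((2 * Real.pi * τ * v j : ℝ) : ℂ) * Complex.I := by
  simp [phiL]; ring

lemma fderiv_fderiv_apply {m N : ℕ} (f : (Fin m → ℝ) → (Fin N → ℂ)) (hf : ContDiff ℝ 2 f)
    (u : Fin m → ℝ) (w : Fin m → ℝ) :
    HasFDerivAt (fun v => fderiv ℝ f v w)
      ((ContinuousLinearMap.apply ℝ (Fin N → ℂ) w).comp (fderiv ℝ (fderiv ℝ f) u)) u := by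
  have hdf : ContDiff ℝ 1 (fderiv ℝ f) := hf.fderiv_right (by norm_num)
  exact (ContinuousLinearMap.apply ℝ (Fin N → ℂ) w).hasFDerivAt.comp u
    ((hdf.differentiable one_ne_zero u).hasFDerivAt)


lemma D_hasFDerivAt (m N : ℕ) (γ : ℕ → Matrix (Fin N) (Fin N) ℂ) (lam : ℕ → ℝ) (τ : ℝ)
    (f : (Fin m → ℝ) → (Fin N → ℂ)) (hf : ContDiff ℝ 2 f) (u : Fin m → ℝ) :
    HasFDerivAt (schroedingerDirac m N γ lam τ f)
      (∑ j : Fin m, ((Real.sqrt (lam j) : ℝ) : ℂ) •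
        (((mvL N (γ (j:ℕ))).comp
            ((ContinuousLinearMap.apply ℝ (Fin N → ℂ) (Pi.single j 1)).comp
              (fderiv ℝ (fderiv ℝ f) u)))
         + ((((2 * Real.pi * τ * u j : ℝ) : ℂ) * Complex.I) •
              ((mvL N (γ (m + (j:ℕ)))).comp (fderiv ℝ f u))
            + (phiL m τ j).smulRight ((γ (m + (j:ℕ))).mulVec (f u))))) u := by
  unfold schroedingerDirac
  apply HasFDerivAt.fun_sum
  intro j _
  apply HasFDerivAt.fun_const_smul
  apply HasFDerivAt.fun_add
  · exact (mvL N (γ (j:ℕ))).hasFDerivAt.comp u (fderiv_fderiv_apply f hf u _)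
  · have hφ : HasFDerivAt (fun v : Fin m → ℝ => ((2 * Real.pi * τ * v j : ℝ) : ℂ) * Complex.I)
        (phiL m τ j) u := by
      have h : (fun v : Fin m → ℝ => ((2 * Real.pi * τ * v j : ℝ) : ℂ) * Complex.I)
          = ⇑(phiL m τ j) := by funext v; rw [phiL_eq]
      rw [h]; exact (phiL m τ j).hasFDerivAt
    have hg : HasFDerivAt (fun v => (γ (m + (j:ℕ))).mulVec (f v))
        ((mvL N (γ (m + (j:ℕ)))).comp (fderiv ℝ f u)) u :=
      (mvL N _).hasFDerivAt.comp u ((hf.differentiable (by norm_num) u).hasFDerivAt)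
    exact hφ.smul hg


lemma sum_sum_diag {m : ℕ} {V : Type*} [AddCommGroup V] [Module ℂ V] [NoZeroSMulDivisors ℂ V]
    (F : Fin m → Fin m → V) (hoff : ∀ k j, k ≠ j → F k j + F j k = 0) :
    ∑ k : Fin m, ∑ j : Fin m, F k j = ∑ k : Fin m, F k k := by
  have e1 : ∑ k : Fin m, ∑ j : Fin m, (F k j + F j k)
      = (∑ k : Fin m, ∑ j : Fin m, F k j) + ∑ k : Fin m, ∑ j : Fin m, F k j := by
    simp only [Finset.sum_add_distrib]
    congr 1
    exact Finset.sum_comm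
  have e2 : ∑ k : Fin m, ∑ j : Fin m, (F k j + F j k) = ∑ k : Fin m, (2:ℂ) • F k k := by
    refine Finset.sum_congr rfl fun k _ => ?_
    rw [Finset.sum_eq_single k]
    · rw [two_smul]
    · intro j _ hjk; exact hoff k j (Ne.symm hjk)
    · intro h; exact absurd (Finset.mem_univ k) h
  have h2 : (2:ℂ) • (∑ k : Fin m, ∑ j : Fin m, F k j) = (2:ℂ) • ∑ k : Fin m, F k k := by
    rw [two_smul, ← e1, e2, Finset.smul_sum]
  exact smul_right_injective V two_ne_zero h2

section terms
variable (m N : ℕ) (γ : ℕ → Matrix (Fin N) (Fin N) ℂ) (lam : ℕ → ℝ) (τ : ℝ)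
    (f : (Fin m → ℝ) → (Fin N → ℂ)) (u : Fin m → ℝ)

noncomputable def sdC (j : ℕ) : ℂ := ((Real.sqrt (lam j) : ℝ) : ℂ)
noncomputable def sdPhi (t : ℝ) : ℂ := ((2 * Real.pi * τ * t : ℝ) : ℂ) * Complex.I
noncomputable def sdH (k j : Fin m) : Fin N → ℂ :=
  fderiv ℝ (fderiv ℝ f) u (Pi.single k 1) (Pi.single j 1)
noncomputable def sdF (k : Fin m) : Fin N → ℂ := fderiv ℝ f u (Pi.single k 1)

noncomputable def sdTA (k j : Fin m) : Fin N → ℂ :=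
  (sdC lam k * sdC lam j) • (γ (k:ℕ) * γ (j:ℕ)).mulVec (sdH m N f u k j)
noncomputable def sdTB (k j : Fin m) : Fin N → ℂ :=
  (sdC lam k * (sdC lam j * sdPhi τ (u j))) • (γ (k:ℕ) * γ (m + (j:ℕ))).mulVec (sdF m N f u k)
noncomputable def sdTC (k j : Fin m) : Fin N → ℂ :=
  (sdC lam k * (sdC lam j * phiL m τ j (Pi.single k 1))) • (γ (k:ℕ) * γ (m + (j:ℕ))).mulVec (f u)
noncomputable def sdTD (k j : Fin m) : Fin N → ℂ :=
  ((sdC lam k * sdPhi τ (u k)) * sdC lam j) • (γ (m + (k:ℕ)) * γ (j:ℕ)).mulVec (sdF m N f u j)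
noncomputable def sdTE (k j : Fin m) : Fin N → ℂ :=
  ((sdC lam k * sdPhi τ (u k)) * (sdC lam j * sdPhi τ (u j))) •
    (γ (m + (k:ℕ)) * γ (m + (j:ℕ))).mulVec (f u)

end terms

lemma mulVec_sum' {N : ℕ} (A : Matrix (Fin N) (Fin N) ℂ) {ι : Type*} (s : Finset ι)
    (v : ι → Fin N → ℂ) : A.mulVec (∑ i ∈ s, v i) = ∑ i ∈ s, A.mulVec (v i) := by
  simp only [← Matrix.mulVecLin_apply, map_sum]

lemma expandD (m N : ℕ) (γ : ℕ → Matrix (Fin N) (Fin N) ℂ) (lam : ℕ → ℝ) (τ : ℝ)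
    (f : (Fin m → ℝ) → (Fin N → ℂ)) (hf : ContDiff ℝ 2 f) (u : Fin m → ℝ) :
    schroedingerDirac m N γ lam τ (schroedingerDirac m N γ lam τ f) u
      = (∑ k : Fin m, ∑ j : Fin m,
          (sdTA m N γ lam f u k j + sdTB m N γ lam τ f u k j + sdTC m N γ lam τ f u k j))
        + ∑ k : Fin m, ∑ j : Fin m, (sdTD m N γ lam τ f u k j + sdTE m N γ lam τ f u k j) := by
  have hD := (D_hasFDerivAt m N γ lam τ f hf u).fderiv
  unfold schroedingerDirac at hD ⊢
  rw [hD]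
  simp only [ContinuousLinearMap.sum_apply, ContinuousLinearMap.smul_apply,
    ContinuousLinearMap.add_apply, ContinuousLinearMap.coe_comp', Function.comp_apply,
    ContinuousLinearMap.smulRight_apply, ContinuousLinearMap.apply_apply, mvL_apply]
  conv_rhs => rw [← Finset.sum_add_distrib]
  refine Finset.sum_congr rfl fun k _ => ?_
  simp only [mulVec_sum', Matrix.mulVec_add, Matrix.mulVec_smul, Matrix.mulVec_mulVec,
    smul_add, Finset.smul_sum]
  rw [← Finset.sum_add_distrib]
  conv_rhs => rw [← Finset.sum_add_distrib]
  refine Finset.sum_congr rfl fun j _ => ?_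
  unfold sdTA sdTB sdTC sdTD sdTE sdC sdPhi sdH sdF
  module

lemma phiL_single (m : ℕ) (τ : ℝ) (j k : Fin m) :
    phiL m τ j (Pi.single k 1) = if j = k then ((2 * Real.pi * τ : ℝ) : ℂ) * Complex.I else 0 := by
  rw [phiL_eq]
  rcases eq_or_ne j k with h | h
  · subst h; simp
  · simp [Pi.single_apply, h, Ne.symm h]

section claims
variable {m N : ℕ} (γ : ℕ → Matrix (Fin N) (Fin N) ℂ) (lam : ℕ → ℝ) (τ : ℝ)
    (f : (Fin m → ℝ) → (Fin N → ℂ)) (u : Fin m → ℝ)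

lemma claimA (hsq : ∀ j < 2 * m, γ j * γ j = -1)
    (hanti : ∀ j < 2 * m, ∀ k < 2 * m, j ≠ k → γ j * γ k + γ k * γ j = 0)
    (hlam : ∀ j < m, 0 ≤ lam j) (hf : ContDiff ℝ 2 f) :
    ∑ k : Fin m, ∑ j : Fin m, sdTA m N γ lam f u k j
      = ∑ j : Fin m, ((lam j : ℝ) : ℂ) • (-(sdH m N f u j j)) := by
  have hsym := hf.contDiffAt.isSymmSndFDerivAt (x := u) (by norm_num)
  rw [sum_sum_diag]
  · refine Finset.sum_congr rfl fun k _ => ?_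
    unfold sdTA sdC
    rw [hsq (k : ℕ) (by have := k.isLt; omega), Matrix.neg_mulVec, Matrix.one_mulVec,
      ← Complex.ofReal_mul, Real.mul_self_sqrt (hlam k k.isLt)]
  · intro k j hkj
    unfold sdTA
    rw [show sdH m N f u j k = sdH m N f u k j from hsym _ _,
      mul_comm (sdC lam (j:ℕ)) (sdC lam (k:ℕ)), ← smul_add, ← Matrix.add_mulVec,
      hanti (k : ℕ) (by have := k.isLt; omega) (j : ℕ) (by have := j.isLt; omega)
        (fun h => hkj (Fin.ext h)),
      Matrix.zero_mulVec, smul_zero]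

lemma claimBD (hanti : ∀ j < 2 * m, ∀ k < 2 * m, j ≠ k → γ j * γ k + γ k * γ j = 0) :
    (∑ k : Fin m, ∑ j : Fin m, sdTB m N γ lam τ f u k j)
      + ∑ k : Fin m, ∑ j : Fin m, sdTD m N γ lam τ f u k j = 0 := by
  have hcomm : ∑ k : Fin m, ∑ j : Fin m, sdTD m N γ lam τ f u k j
      = ∑ k : Fin m, ∑ j : Fin m, sdTD m N γ lam τ f u j k := Finset.sum_comm
  rw [hcomm, ← Finset.sum_add_distrib]
  refine Finset.sum_eq_zero fun k _ => ?_
  rw [← Finset.sum_add_distrib]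
  refine Finset.sum_eq_zero fun j _ => ?_
  unfold sdTB sdTD
  rw [show (sdC lam (j:ℕ) * sdPhi τ (u j)) * sdC lam (k:ℕ)
        = sdC lam (k:ℕ) * (sdC lam (j:ℕ) * sdPhi τ (u j)) from by ring,
    ← smul_add, ← Matrix.add_mulVec,
    hanti (k : ℕ) (by have := k.isLt; omega) (m + (j : ℕ)) (by have := j.isLt; omega)
      (by have := k.isLt; omega),
    Matrix.zero_mulVec, smul_zero]

lemma claimC (hlam : ∀ j < m, 0 ≤ lam j) :
    ∑ k : Fin m, ∑ j : Fin m, sdTC m N γ lam τ f u k j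
      = (((2 * Real.pi * τ : ℝ) : ℂ) * Complex.I) •
          ∑ j : Fin m, ((lam j : ℝ) : ℂ) • (γ (j : ℕ) * γ (m + (j : ℕ))).mulVec (f u) := by
  rw [Finset.smul_sum]
  refine Finset.sum_congr rfl fun k _ => ?_
  rw [Finset.sum_eq_single k]
  · unfold sdTC sdC
    rw [phiL_single, if_pos rfl, smul_smul]
    congr 1
    have haa : ((Real.sqrt (lam k) : ℝ) : ℂ) * ((Real.sqrt (lam k) : ℝ) : ℂ)
        = ((lam k : ℝ) : ℂ) := by
      rw [← Complex.ofReal_mul, Real.mul_self_sqrt (hlam k k.isLt)]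
    linear_combination (((2 * Real.pi * τ : ℝ) : ℂ) * Complex.I) * haa
  · intro j _ hjk
    unfold sdTC
    rw [phiL_single, if_neg hjk]
    simp
  · intro h; exact absurd (Finset.mem_univ k) h

lemma claimE (hsq : ∀ j < 2 * m, γ j * γ j = -1)
    (hanti : ∀ j < 2 * m, ∀ k < 2 * m, j ≠ k → γ j * γ k + γ k * γ j = 0)
    (hlam : ∀ j < m, 0 ≤ lam j) :
    ∑ k : Fin m, ∑ j : Fin m, sdTE m N γ lam τ f u k j
      = ∑ j : Fin m, ((lam j : ℝ) : ℂ) •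
          (((4 * Real.pi ^ 2 * τ ^ 2 * (u j) ^ 2 : ℝ) : ℂ) • f u) := by
  rw [sum_sum_diag]
  · refine Finset.sum_congr rfl fun k _ => ?_
    unfold sdTE
    rw [hsq (m + (k : ℕ)) (by have := k.isLt; omega), Matrix.neg_mulVec, Matrix.one_mulVec,
      smul_neg, smul_smul, ← neg_smul]
    congr 1
    have haa : sdC lam (k:ℕ) * sdC lam (k:ℕ) = ((lam k : ℝ) : ℂ) := by
      unfold sdC
      rw [← Complex.ofReal_mul, Real.mul_self_sqrt (hlam k k.isLt)]
    have hpp : sdPhi τ (u k) * sdPhi τ (u k)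
        = -(((4 * Real.pi ^ 2 * τ ^ 2 * (u k) ^ 2 : ℝ) : ℂ)) := by
      unfold sdPhi
      rw [show (((2 * Real.pi * τ * u k : ℝ) : ℂ) * Complex.I)
            * (((2 * Real.pi * τ * u k : ℝ) : ℂ) * Complex.I)
          = ((2 * Real.pi * τ * u k : ℝ) : ℂ) ^ 2 * Complex.I ^ 2 from by ring, Complex.I_sq]
      push_cast; ring
    linear_combination (-(sdPhi τ (u k) * sdPhi τ (u k))) * haa + (-((lam k : ℝ) : ℂ)) * hpp
  · intro k j hkj
    unfold sdTE
    rw [show (sdC lam (j:ℕ) * sdPhi τ (u j)) * (sdC lam (k:ℕ) * sdPhi τ (u k))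
          = (sdC lam (k:ℕ) * sdPhi τ (u k)) * (sdC lam (j:ℕ) * sdPhi τ (u j)) from by ring,
      ← smul_add, ← Matrix.add_mulVec,
      hanti (m + (k : ℕ)) (by have := k.isLt; omega) (m + (j : ℕ)) (by have := j.isLt; omega)
        (by intro h; exact hkj (Fin.ext (by omega))),
      Matrix.zero_mulVec, smul_zero]

end claims

theorem schroedingerDirac_sq
    (m N : ℕ) (hm : 1 ≤ m) (hN : 1 ≤ N)
    (γ : ℕ → Matrix (Fin N) (Fin N) ℂ)
    (hsq : ∀ j < 2 * m, γ j * γ j = -1)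
    (hanti : ∀ j < 2 * m, ∀ k < 2 * m, j ≠ k → γ j * γ k + γ k * γ j = 0)
    (lam : ℕ → ℝ) (hlam : ∀ j < m, 0 ≤ lam j) (τ : ℝ)
    (f : (Fin m → ℝ) → (Fin N → ℂ)) (hf : ContDiff ℝ 2 f) (u : Fin m → ℝ) :
    schroedingerDirac m N γ lam τ (schroedingerDirac m N γ lam τ f) u =
      (∑ j : Fin m, ((lam j : ℝ) : ℂ) •
        (-(fderiv ℝ (fun v => fderiv ℝ f v (Pi.single j 1)) u (Pi.single j 1)) +
          (((4 * Real.pi ^ 2 * τ ^ 2 * (u j) ^ 2 : ℝ) : ℂ)) • f u)) +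
      ((((2 * Real.pi * τ : ℝ) : ℂ) * Complex.I) •
        ∑ j : Fin m, ((lam j : ℝ) : ℂ) •
          (γ (j : ℕ) * γ (m + (j : ℕ))).mulVec (f u)) := by
  rw [expandD m N γ lam τ f hf u]
  have hH : ∀ j : Fin m, fderiv ℝ (fun v => fderiv ℝ f v (Pi.single j 1)) u (Pi.single j 1)
      = sdH m N f u j j := fun j => by
    rw [(fderiv_fderiv_apply f hf u (Pi.single j 1)).fderiv]; rfl
  have hRHSsplit : ∑ j : Fin m, ((lam j : ℝ) : ℂ) •
        (-(fderiv ℝ (fun v => fderiv ℝ f v (Pi.single j 1)) u (Pi.single j 1)) +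
          (((4 * Real.pi ^ 2 * τ ^ 2 * (u j) ^ 2 : ℝ) : ℂ)) • f u)
      = (∑ j : Fin m, ((lam j : ℝ) : ℂ) • (-(sdH m N f u j j)))
        + ∑ j : Fin m, ((lam j : ℝ) : ℂ) •
            (((4 * Real.pi ^ 2 * τ ^ 2 * (u j) ^ 2 : ℝ) : ℂ) • f u) := by
    rw [← Finset.sum_add_distrib]
    refine Finset.sum_congr rfl fun j _ => ?_
    rw [hH j, smul_add]
  rw [hRHSsplit]
  have h1 : ∑ k : Fin m, ∑ j : Fin m,
        (sdTA m N γ lam f u k j + sdTB m N γ lam τ f u k j + sdTC m N γ lam τ f u k j)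
      = (∑ k : Fin m, ∑ j : Fin m, sdTA m N γ lam f u k j)
        + (∑ k : Fin m, ∑ j : Fin m, sdTB m N γ lam τ f u k j)
        + ∑ k : Fin m, ∑ j : Fin m, sdTC m N γ lam τ f u k j := by
    simp only [Finset.sum_add_distrib]
  have h2 : ∑ k : Fin m, ∑ j : Fin m,
        (sdTD m N γ lam τ f u k j + sdTE m N γ lam τ f u k j)
      = (∑ k : Fin m, ∑ j : Fin m, sdTD m N γ lam τ f u k j)
        + ∑ k : Fin m, ∑ j : Fin m, sdTE m N γ lam τ f u k j := by
    simp only [Finset.sum_add_distrib]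
  have hbd := claimBD γ lam τ f u hanti
  rw [h1, h2, claimA γ lam f u hsq hanti hlam hf, claimC γ lam τ f u hlam,
    claimE γ lam τ f u hsq hanti hlam, ← sub_eq_zero, ← hbd]
  abel
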